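/- arXiv:2211.08739 — 2 statements merged into one kernel-verified Lean document; each statement's English description precedes it below -/
import Mathlib

section
/- Let ζ₁ < … < ζ_m be real numbers, σ : ℝ → ℝ Lipschitz with σ(ζ_i) ≠ 0 for each i, and define α_i = (μ(ζ_i−) − μ(ζ_i+))/(2σ²(ζ_i)) for a piecewise Lipschitz μ with one-sided limits at each ζ_i. Let φ be as below, ν ∈ (0,φ), and define G(x) = x + Σ_{i=1}^m α_i φ((x−ζ_i)/ν)(x−ζ_i)|x−ζ_i| with bump φ(u) = (1−u²)⁴ for |u| ≤ 1 and 0 otherwise. Then G is differentiable on ℝ and G'(ζ_i) = 1 for all i ∈ {1,…,m}. -/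
/-- The bump function used for the transformation `G`. -/
noncomputable def bump (u : ℝ) : ℝ := if |u| ≤ 1 then (1 - u ^ 2) ^ 4 else 0

/-- The transformation `G` built from the bump function. -/
noncomputable def Gtrans {m : ℕ} (ζ α : Fin m → ℝ) (ν : ℝ) (x : ℝ) : ℝ :=
  x + ∑ i, α i * bump ((x - ζ i) / ν) * ((x - ζ i) * |x - ζ i|)

noncomputable def bump' (u : ℝ) : ℝ := if |u| < 1 then (-8) * u * (1 - u ^ 2) ^ 3 else 0

lemma bump_nonneg (u : ℝ) : 0 ≤ bump u := by
  unfold bump; split <;> positivity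

lemma bump_le (u : ℝ) : bump u ≤ (1 - u ^ 2) ^ 4 := by
  unfold bump; split
  · exact le_rfl
  · positivity

lemma hasDerivAt_bump (u : ℝ) : HasDerivAt bump (bump' u) u := by
  rcases lt_trichotomy |u| 1 with h | h | h
  · have hmem : {v : ℝ | |v| < 1} ∈ nhds u :=
      (isOpen_lt (continuous_abs) continuous_const).mem_nhds h
    have hev : bump =ᶠ[nhds u] fun v => (1 - v ^ 2) ^ 4 :=
      Filter.eventuallyEq_of_mem hmem (fun v hv => by
        simp only [Set.mem_setOf_eq] at hv
        simp [bump, le_of_lt hv])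
    have hd : HasDerivAt (fun v : ℝ => (1 - v ^ 2) ^ 4) (bump' u) u := by
      have h0 := ((hasDerivAt_pow 2 u).const_sub 1).pow 4
      refine h0.congr_deriv ?_
      rw [bump', if_pos h]
      norm_num; ring
    exact hd.congr_of_eventuallyEq hev
  · -- boundary case |u| = 1
    have hu2 : u ^ 2 = 1 := by
      have h1 := sq_abs u
      rw [h] at h1
      nlinarith
    have hb0 : bump u = 0 := by simp [bump, h.le, hu2]
    have hb' : bump' u = 0 := by simp [bump', h]
    rw [hb', hasDerivAt_iff_tendsto_slope]
    have hev : ∀ᶠ v in nhdsWithin u {u}ᶜ,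
        ‖slope bump u v‖ ≤ |v - u| ^ 3 * (v + u) ^ 4 := by
      filter_upwards [self_mem_nhdsWithin] with v hv
      have hvne : v - u ≠ 0 := sub_ne_zero.mpr hv
      have habs : (0:ℝ) < |v - u| := abs_pos.mpr hvne
      rw [slope_def_field, hb0, sub_zero]
      have hnorm : ‖bump v / (v - u)‖ = bump v / |v - u| := by
        rw [Real.norm_eq_abs, abs_div, abs_of_nonneg (bump_nonneg v)]
      rw [hnorm, div_le_iff₀ habs]
      have h4 : (1 - v ^ 2) ^ 4 = (v - u) ^ 4 * (v + u) ^ 4 := by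
        have hfac : 1 - v ^ 2 = -((v - u) * (v + u)) := by linear_combination -hu2
        rw [hfac]; ring
      have hab : |v - u| ^ 4 = (v - u) ^ 4 := by
        rw [← abs_pow, abs_of_nonneg (by positivity)]
      calc bump v ≤ (1 - v ^ 2) ^ 4 := bump_le v
        _ = (v - u) ^ 4 * (v + u) ^ 4 := h4
        _ = |v - u| ^ 3 * (v + u) ^ 4 * |v - u| := by rw [← hab]; ring
    refine squeeze_zero_norm' hev ?_
    have hc : Continuous fun v : ℝ => |v - u| ^ 3 * (v + u) ^ 4 := by continuity
    have hcont : Filter.Tendsto (fun v : ℝ => |v - u| ^ 3 * (v + u) ^ 4)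
        (nhds u) (nhds 0) := by
      have := hc.tendsto u
      simpa using this
    exact hcont.mono_left nhdsWithin_le_nhds
  · have hmem : {v : ℝ | 1 < |v|} ∈ nhds u :=
      (isOpen_lt continuous_const continuous_abs).mem_nhds h
    have hev : bump =ᶠ[nhds u] fun _ => (0:ℝ) :=
      Filter.eventuallyEq_of_mem hmem (fun v hv => by
        simp only [Set.mem_setOf_eq] at hv
        simp [bump, not_le.mpr hv])
    have hb' : bump' u = 0 := by simp [bump', not_lt.mpr h.le]
    rw [hb']
    exact (hasDerivAt_const u 0).congr_of_eventuallyEq hev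

lemma hasDerivAt_mul_abs (x : ℝ) : HasDerivAt (fun y : ℝ => y * |y|) (2 * |x|) x := by
  rcases lt_trichotomy x 0 with h | h | h
  · have hmem : {v : ℝ | v < 0} ∈ nhds x :=
      (isOpen_lt continuous_id continuous_const).mem_nhds h
    have hev : (fun y : ℝ => y * |y|) =ᶠ[nhds x] fun y => -(y * y) :=
      Filter.eventuallyEq_of_mem hmem (fun v hv => by
        simp only [Set.mem_setOf_eq] at hv
        rw [abs_of_neg hv]; ring)
    have hd : HasDerivAt (fun y : ℝ => -(y * y)) (2 * |x|) x := by
      have h0 := ((hasDerivAt_id x).mul (hasDerivAt_id x)).neg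
      refine h0.congr_deriv ?_
      rw [abs_of_neg h]; simp only [id]; ring
    exact hd.congr_of_eventuallyEq hev
  · subst h
    rw [hasDerivAt_iff_tendsto_slope]
    have h0 : Filter.Tendsto (fun v : ℝ => |v|) (nhdsWithin 0 {(0:ℝ)}ᶜ) (nhds 0) := by
      have h1 : Filter.Tendsto (fun v : ℝ => |v|) (nhds 0) (nhds |(0:ℝ)|) :=
        continuous_abs.tendsto 0
      simpa using h1.mono_left nhdsWithin_le_nhds
    have hev : (fun v : ℝ => |v|) =ᶠ[nhdsWithin 0 {(0:ℝ)}ᶜ]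
        slope (fun y : ℝ => y * |y|) 0 := by
      filter_upwards [self_mem_nhdsWithin] with v hv
      have hvne : v ≠ 0 := hv
      rw [slope_def_field]
      field_simp
      simp
    have : Filter.Tendsto (slope (fun y : ℝ => y * |y|) 0)
        (nhdsWithin 0 {(0:ℝ)}ᶜ) (nhds 0) := h0.congr' hev
    simpa using this
  · have hmem : {v : ℝ | 0 < v} ∈ nhds x :=
      (isOpen_lt continuous_const continuous_id).mem_nhds h
    have hev : (fun y : ℝ => y * |y|) =ᶠ[nhds x] fun y => y * y :=
      Filter.eventuallyEq_of_mem hmem (fun v hv => by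
        simp only [Set.mem_setOf_eq] at hv
        rw [abs_of_pos hv])
    have hd : HasDerivAt (fun y : ℝ => y * y) (2 * |x|) x := by
      have h0 := (hasDerivAt_id x).mul (hasDerivAt_id x)
      refine h0.congr_deriv ?_
      rw [abs_of_pos h]; simp only [id]; ring
    exact hd.congr_of_eventuallyEq hev

noncomputable def Dterm (ζi αi ν x : ℝ) : ℝ :=
  αi * (bump' ((x - ζi) / ν) * (1 / ν)) * ((x - ζi) * |x - ζi|) +
    αi * bump ((x - ζi) / ν) * (2 * |x - ζi|)

lemma hasDerivAt_term (ζi αi ν x : ℝ) :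
    HasDerivAt (fun x => αi * bump ((x - ζi) / ν) * ((x - ζi) * |x - ζi|))
      (Dterm ζi αi ν x) x := by
  have hin : HasDerivAt (fun x : ℝ => (x - ζi) / ν) (1 / ν) x := by
    simpa using ((hasDerivAt_id x).sub_const ζi).div_const ν
  have h1 : HasDerivAt (fun x : ℝ => bump ((x - ζi) / ν))
      (bump' ((x - ζi) / ν) * (1 / ν)) x :=
    (hasDerivAt_bump _).comp x hin
  have h2 : HasDerivAt (fun x : ℝ => (x - ζi) * |x - ζi|) (2 * |x - ζi|) x := by
    have := (hasDerivAt_mul_abs (x - ζi)).comp x ((hasDerivAt_id x).sub_const ζi)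
    exact this.congr_deriv (mul_one _)
  exact (h1.const_mul αi).mul h2

/-- `G` is differentiable on ℝ and `G'(ζ i) = 1` for all `i`. -/
theorem stmt_11 (m : ℕ) (ζ α : Fin m → ℝ) (hζ : StrictMono ζ) (ν : ℝ) (hν : 0 < ν)
    (hν1 : ∀ i, 8 * |α i| * ν < 1)
    (hν2 : ∀ i : Fin m, ∀ h : i.val + 1 < m, 2 * ν < ζ ⟨i.val + 1, h⟩ - ζ i) :
    Differentiable ℝ (Gtrans ζ α ν) ∧ ∀ i, deriv (Gtrans ζ α ν) (ζ i) = 1 := by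
  have key : ∀ x, HasDerivAt (Gtrans ζ α ν)
      (1 + ∑ i, Dterm (ζ i) (α i) ν x) x := by
    intro x
    have hsum : HasDerivAt (fun x => ∑ i, α i * bump ((x - ζ i) / ν) * ((x - ζ i) * |x - ζ i|))
        (∑ i, Dterm (ζ i) (α i) ν x) x :=
      HasDerivAt.fun_sum (fun i _ => hasDerivAt_term (ζ i) (α i) ν x)
    exact (hasDerivAt_id x).add hsum
  have gap : ∀ i j : Fin m, i ≠ j → 2 * ν < |ζ i - ζ j| := by
    have base : ∀ i j : Fin m, i < j → 2 * ν < ζ j - ζ i := by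
      intro i j hij
      have hm : i.val + 1 < m := lt_of_le_of_lt (Nat.succ_le_of_lt hij) j.isLt
      have h1 := hν2 i hm
      have h2 : ζ ⟨i.val + 1, hm⟩ ≤ ζ j := hζ.monotone (by
        show i.val + 1 ≤ j.val
        exact Nat.succ_le_of_lt hij)
      linarith
    intro i j hij
    rcases lt_or_gt_of_ne hij with h | h
    · have := base i j h
      calc 2 * ν < ζ j - ζ i := this
        _ ≤ |ζ i - ζ j| := by rw [abs_sub_comm]; exact le_abs_self _
    · have := base j i h
      calc 2 * ν < ζ i - ζ j := this
        _ ≤ |ζ i - ζ j| := le_abs_self _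
  have dzero : ∀ i j : Fin m, Dterm (ζ j) (α j) ν (ζ i) = 0 := by
    intro i j
    by_cases hij : j = i
    · subst hij
      simp [Dterm]
    · have hgap : 2 * ν < |ζ i - ζ j| := gap i j (Ne.symm hij)
      have hu : 1 < |(ζ i - ζ j) / ν| := by
        rw [abs_div, abs_of_pos hν, lt_div_iff₀ hν]
        linarith
      have hb : bump ((ζ i - ζ j) / ν) = 0 := by
        simp [bump, not_le.mpr hu]
      have hb' : bump' ((ζ i - ζ j) / ν) = 0 := by
        simp [bump', not_lt.mpr hu.le]
      simp [Dterm, hb, hb']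
  constructor
  · exact fun x => (key x).differentiableAt
  · intro i
    rw [(key (ζ i)).deriv]
    rw [Finset.sum_eq_zero (fun j _ => dzero i j)]
    ring
end

section
/- With G defined as G(x) = x + Σ_{i=1}^m α_i φ((x−ζ_i)/ν)(x−ζ_i)|x−ζ_i|, where φ(u) = (1−u²)⁴·1_{|u|≤1} and ν ∈ (0, min{min_i 1/(8|α_i|), min_i (ζ_{i+1}−ζ_i)/2}), the derivative G' is Lipschitz continuous on ℝ. -/
open Set Filter

/-- Piecewise polynomial `S`, equal to `2t(1-t²)³(1-5t²)` (expanded) on `t ≤ 1` and `0` beyond. -/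
noncomputable def Sfun (t : ℝ) : ℝ :=
  if t ≤ 1 then 2*t - 16*t^3 + 36*t^5 - 32*t^7 + 10*t^9 else 0

noncomputable def Sd (t : ℝ) : ℝ :=
  if t ≤ 1 then 2 - 48*t^2 + 180*t^4 - 224*t^6 + 90*t^8 else 0

noncomputable def pfun (u : ℝ) : ℝ := Sfun |u|

lemma polyS_deriv (t : ℝ) :
    HasDerivAt (fun s : ℝ => 2*s - 16*s^3 + 36*s^5 - 32*s^7 + 10*s^9)
      (2 - 48*t^2 + 180*t^4 - 224*t^6 + 90*t^8) t := by
  have h1 : HasDerivAt (fun s : ℝ => s) 1 t := hasDerivAt_id t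
  have h := ((((h1.const_mul (2:ℝ)).sub ((hasDerivAt_pow 3 t).const_mul (16:ℝ))).add
      ((hasDerivAt_pow 5 t).const_mul (36:ℝ))).sub
      ((hasDerivAt_pow 7 t).const_mul (32:ℝ))).add
      ((hasDerivAt_pow 9 t).const_mul (10:ℝ))
  refine h.congr_deriv ?_
  norm_num
  ring

lemma Sfun_hasDeriv (t : ℝ) : HasDerivAt Sfun (Sd t) t := by
  rcases lt_trichotomy t 1 with ht | ht | ht
  · have heq : Sfun =ᶠ[nhds t] (fun s : ℝ => 2*s - 16*s^3 + 36*s^5 - 32*s^7 + 10*s^9) := by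
      filter_upwards [Iio_mem_nhds ht] with s hs
      simp [Sfun, le_of_lt (mem_Iio.mp hs)]
    have : Sd t = 2 - 48*t^2 + 180*t^4 - 224*t^6 + 90*t^8 := if_pos ht.le
    rw [this]
    exact (polyS_deriv t).congr_of_eventuallyEq heq
  · subst ht
    have hL : HasDerivWithinAt Sfun 0 (Iic 1) 1 := by
      have h := (polyS_deriv 1).hasDerivWithinAt (s := Iic 1)
      have h0 : (2 - 48*(1:ℝ)^2 + 180*1^4 - 224*1^6 + 90*1^8) = 0 := by norm_num
      rw [h0] at h
      exact h.congr (fun s hs => if_pos hs) (if_pos le_rfl)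
    have hR : HasDerivWithinAt Sfun 0 (Ici 1) 1 := by
      have h := (hasDerivWithinAt_const (1:ℝ) (Ici 1) (0:ℝ))
      refine h.congr (fun s hs => ?_) ?_
      · by_cases h1 : s ≤ 1
        · have : s = 1 := le_antisymm h1 hs
          subst this; simp [Sfun]; norm_num
        · simp [Sfun, h1]
      · simp [Sfun]; norm_num
    have := hL.union hR
    rw [Iic_union_Ici, hasDerivWithinAt_univ] at this
    have h0 : Sd 1 = 0 := by simp [Sd]; norm_num
    rw [h0]; exact this
  · have heq : Sfun =ᶠ[nhds t] (fun _ : ℝ => (0:ℝ)) := by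
      filter_upwards [Ioi_mem_nhds ht] with s hs
      simp [Sfun, not_le.mpr (mem_Ioi.mp hs)]
    have : Sd t = 0 := if_neg (not_le.mpr ht)
    rw [this]
    exact (hasDerivAt_const t 0).congr_of_eventuallyEq heq

lemma Sd_bound : ∀ t ∈ Ici (0:ℝ), ‖Sd t‖ ≤ 544 := by
  intro t ht
  simp only [Real.norm_eq_abs]
  by_cases h1 : t ≤ 1
  · rw [Sd, if_pos h1, abs_le]
    have h0 : (0:ℝ) ≤ t := ht
    have h2 : t^2 ≤ 1 := pow_le_one₀ h0 h1
    have h4 : t^4 ≤ 1 := pow_le_one₀ h0 h1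
    have h6 : t^6 ≤ 1 := pow_le_one₀ h0 h1
    have h8 : t^8 ≤ 1 := pow_le_one₀ h0 h1
    have n2 : 0 ≤ t^2 := pow_nonneg h0 2
    have n4 : 0 ≤ t^4 := pow_nonneg h0 4
    have n6 : 0 ≤ t^6 := pow_nonneg h0 6
    have n8 : 0 ≤ t^8 := pow_nonneg h0 8
    constructor <;> linarith
  · rw [Sd, if_neg h1]; norm_num

lemma Sfun_lip : ∀ a b : ℝ, 0 ≤ a → 0 ≤ b → |Sfun a - Sfun b| ≤ 544 * |a - b| := by
  intro a b ha hb
  have := Convex.norm_image_sub_le_of_norm_hasDerivWithin_le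
    (f := Sfun) (f' := Sd) (s := Ici (0:ℝ)) (C := 544)
    (fun x _ => (Sfun_hasDeriv x).hasDerivWithinAt) Sd_bound (convex_Ici 0) hb ha
  simpa [Real.norm_eq_abs] using this

lemma pfun_lip (a b : ℝ) : |pfun a - pfun b| ≤ 544 * |a - b| := by
  refine le_trans (Sfun_lip _ _ (abs_nonneg a) (abs_nonneg b)) ?_
  have h := abs_abs_sub_abs_le_abs_sub a b
  linarith [mul_le_mul_of_nonneg_left h (by norm_num : (0:ℝ) ≤ 544)]

lemma sq_hasDeriv (u : ℝ) : HasDerivAt (fun v : ℝ => v^2) (2*u) u := by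
  have := hasDerivAt_pow 2 u
  norm_num at this
  exact this

lemma abs_mul_self_hasDeriv (u : ℝ) : HasDerivAt (fun v : ℝ => v * |v|) (2 * |u|) u := by
  rcases lt_trichotomy u 0 with hu | hu | hu
  · have heq : (fun v : ℝ => v * |v|) =ᶠ[nhds u] (fun v : ℝ => -(v^2)) := by
      filter_upwards [Iio_mem_nhds hu] with v hv
      rw [abs_of_neg (mem_Iio.mp hv)]; ring
    have h := ((sq_hasDeriv u).neg).congr_of_eventuallyEq heq
    refine h.congr_deriv ?_
    rw [abs_of_neg hu]; ring
  · subst hu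
    have hL : HasDerivWithinAt (fun v : ℝ => v * |v|) 0 (Iic 0) 0 := by
      have h := ((sq_hasDeriv 0).neg).hasDerivWithinAt (s := Iic 0)
      have h' : -((2:ℝ) * 0) = 0 := by ring
      rw [h'] at h
      exact h.congr (fun v hv => by rw [abs_of_nonpos (mem_Iic.mp hv), Pi.neg_apply]; ring) (by simp)
    have hR : HasDerivWithinAt (fun v : ℝ => v * |v|) 0 (Ici 0) 0 := by
      have h := (sq_hasDeriv 0).hasDerivWithinAt (s := Ici 0)
      have h' : (2:ℝ) * 0 = 0 := by ring
      rw [h'] at h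
      exact h.congr (fun v hv => by rw [abs_of_nonneg (mem_Ici.mp hv)]; ring) (by simp)
    have h := hL.union hR
    rw [Iic_union_Ici, hasDerivWithinAt_univ] at h
    simpa using h
  · have heq : (fun v : ℝ => v * |v|) =ᶠ[nhds u] (fun v : ℝ => v^2) := by
      filter_upwards [Ioi_mem_nhds hu] with v hv
      rw [abs_of_pos (mem_Ioi.mp hv)]; ring
    have h := (sq_hasDeriv u).congr_of_eventuallyEq heq
    refine h.congr_deriv ?_
    rw [abs_of_pos hu]
lemma bump4_hasDeriv (u : ℝ) :
    HasDerivAt (fun v : ℝ => (1 - v^2)^4) ((4:ℕ) * (1 - u^2)^3 * (-(2*u))) u := by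
  exact ((sq_hasDeriv u).const_sub 1).pow 4

lemma kfun_hasDeriv (u : ℝ) :
    HasDerivAt (fun v : ℝ => bump v * (v * |v|)) (pfun u) u := by
  rcases lt_trichotomy |u| 1 with h | h | h
  · have heq : (fun v : ℝ => bump v * (v * |v|)) =ᶠ[nhds u]
        (fun v : ℝ => (1 - v^2)^4 * (v * |v|)) := by
      have hop : IsOpen {v : ℝ | |v| < 1} := isOpen_lt continuous_abs continuous_const
      filter_upwards [hop.mem_nhds h] with v hv
      simp [bump, le_of_lt hv]
    have hmul := (bump4_hasDeriv u).mul (abs_mul_self_hasDeriv u)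
    have hder := hmul.congr_of_eventuallyEq heq
    refine hder.congr_deriv ?_
    simp only [pfun, Sfun]
    rcases abs_cases u with ⟨h1, _⟩ | ⟨h1, _⟩ <;>
      rw [if_pos (le_of_lt h), h1] <;> push_cast <;> ring
  · rcases (abs_eq (by norm_num : (0:ℝ) ≤ 1)).mp h with h1 | h1
    · subst h1
      have hq := (bump4_hasDeriv 1).mul (sq_hasDeriv 1)
      have h0 : ((4:ℕ) * (1 - (1:ℝ)^2)^3 * (-(2*1)) * 1^2 + (1 - 1^2)^4 * (2*1)) = 0 := by
        norm_num
      have hL : HasDerivWithinAt (fun v : ℝ => bump v * (v * |v|)) 0 (Iic 1) 1 := by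
        have h := hq.hasDerivWithinAt (s := Iic 1)
        rw [h0] at h
        refine h.congr_of_eventuallyEq ?_ ?_
        · filter_upwards [mem_nhdsWithin_of_mem_nhds (Ioi_mem_nhds (by norm_num : (0:ℝ) < 1)),
            self_mem_nhdsWithin] with v hv0 hv1
          have hv0' : (0:ℝ) < v := mem_Ioi.mp hv0
          have hv1' : v ≤ 1 := mem_Iic.mp hv1
          have habs : |v| ≤ 1 := abs_le.mpr ⟨by linarith, hv1'⟩
          simp only [bump, abs_of_pos hv0', if_pos hv1', Pi.mul_apply]
          ring
        · norm_num [bump]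
      have hR : HasDerivWithinAt (fun v : ℝ => bump v * (v * |v|)) 0 (Ici 1) 1 := by
        refine (hasDerivWithinAt_const 1 (Ici 1) 0).congr (fun v hv => ?_) (by norm_num [bump])
        have hv' : (1:ℝ) ≤ v := mem_Ici.mp hv
        by_cases hb : |v| ≤ 1
        · have : v = 1 := le_antisymm (le_trans (le_abs_self v) hb) hv'
          subst this
          norm_num [bump]
        · simp [bump, hb]
      have h := hL.union hR
      rw [Iic_union_Ici, hasDerivWithinAt_univ] at h
      refine h.congr_deriv ?_
      norm_num [pfun, Sfun]
    · subst h1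
      have hq := (bump4_hasDeriv (-1)).mul ((sq_hasDeriv (-1)).neg)
      have h0 : ((4:ℕ) * (1 - (-1:ℝ)^2)^3 * (-(2*(-1))) * (-((-1)^2)) +
          (1 - (-1)^2)^4 * (-(2*(-1)))) = 0 := by norm_num
      have hR : HasDerivWithinAt (fun v : ℝ => bump v * (v * |v|)) 0 (Ici (-1)) (-1) := by
        have h := hq.hasDerivWithinAt (s := Ici (-1))
        simp only [Pi.neg_apply] at h
        rw [h0] at h
        refine h.congr_of_eventuallyEq ?_ ?_
        · filter_upwards [mem_nhdsWithin_of_mem_nhds (Iio_mem_nhds (by norm_num : (-1:ℝ) < 0)),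
            self_mem_nhdsWithin] with v hv0 hv1
          have hv0' : v < 0 := mem_Iio.mp hv0
          have hv1' : (-1:ℝ) ≤ v := mem_Ici.mp hv1
          have habs : |v| ≤ 1 := abs_le.mpr ⟨hv1', by linarith⟩
          have hc : -v ≤ 1 := by linarith
          simp only [bump, abs_of_neg hv0', if_pos hc, Pi.mul_apply, Pi.neg_apply]
          ring
        · norm_num [bump]
      have hL : HasDerivWithinAt (fun v : ℝ => bump v * (v * |v|)) 0 (Iic (-1)) (-1) := by
        refine (hasDerivWithinAt_const (-1) (Iic (-1)) 0).congr (fun v hv => ?_)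
          (by norm_num [bump])
        have hv' : v ≤ -1 := mem_Iic.mp hv
        by_cases hb : |v| ≤ 1
        · have : v = -1 := le_antisymm hv' (neg_le_of_abs_le hb)
          subst this
          norm_num [bump]
        · simp [bump, hb]
      have h := hL.union hR
      rw [Iic_union_Ici, hasDerivWithinAt_univ] at h
      refine h.congr_deriv ?_
      norm_num [pfun, Sfun]
  · have heq : (fun v : ℝ => bump v * (v * |v|)) =ᶠ[nhds u] (fun _ : ℝ => (0:ℝ)) := by
      have hop : IsOpen {v : ℝ | 1 < |v|} := isOpen_lt continuous_const continuous_abs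
      filter_upwards [hop.mem_nhds h] with v hv
      simp [bump, not_le.mpr hv]
    have hder := (hasDerivAt_const u (0:ℝ)).congr_of_eventuallyEq heq
    refine hder.congr_deriv ?_
    simp only [pfun, Sfun]
    rw [if_neg (not_le.mpr h)]

lemma Gtrans_hasDeriv {m : ℕ} (ζ α : Fin m → ℝ) (ν : ℝ) (hν : 0 < ν) (x : ℝ) :
    HasDerivAt (Gtrans ζ α ν) (1 + ∑ i, α i * ν * pfun ((x - ζ i)/ν)) x := by
  have hν' : ν ≠ 0 := ne_of_gt hν
  have hrw : Gtrans ζ α ν = fun y => y + ∑ i, α i * ν^2 *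
      ((fun v => bump v * (v * |v|)) ((y - ζ i)/ν)) := by
    funext y
    unfold Gtrans
    congr 1
    refine Finset.sum_congr rfl (fun i _ => ?_)
    have h1 : |(y - ζ i)/ν| = |y - ζ i|/ν := by rw [abs_div, abs_of_pos hν]
    simp only [h1]
    field_simp
  rw [hrw]
  have hA : ∀ i ∈ Finset.univ, HasDerivAt
      (fun y : ℝ => α i * ν^2 * ((fun v => bump v * (v * |v|)) ((y - ζ i)/ν)))
      (α i * ν * pfun ((x - ζ i)/ν)) x := by
    intro i _
    have hin : HasDerivAt (fun y : ℝ => (y - ζ i)/ν) (1/ν) x := by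
      simpa using ((hasDerivAt_id x).sub_const (ζ i)).div_const ν
    have hc := (kfun_hasDeriv ((x - ζ i)/ν)).comp x hin
    have hm := hc.const_mul (α i * ν^2)
    refine hm.congr_deriv ?_
    field_simp
  exact (hasDerivAt_id x).add (HasDerivAt.fun_sum hA)

/-- The derivative `G'` is Lipschitz continuous on ℝ. -/
theorem stmt_12 (m : ℕ) (ζ α : Fin m → ℝ) (hζ : StrictMono ζ) (ν : ℝ) (hν : 0 < ν)
    (hν1 : ∀ i, 8 * |α i| * ν < 1)
    (hν2 : ∀ i : Fin m, ∀ h : i.val + 1 < m, 2 * ν < ζ ⟨i.val + 1, h⟩ - ζ i) :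
    ∃ L : NNReal, LipschitzWith L (deriv (Gtrans ζ α ν)) := by
  have hd : deriv (Gtrans ζ α ν) = fun x => 1 + ∑ i, α i * ν * pfun ((x - ζ i)/ν) :=
    funext fun x => (Gtrans_hasDeriv ζ α ν hν x).deriv
  set C : ℝ := ∑ i, |α i| * 544 with hC
  have hC0 : 0 ≤ C := Finset.sum_nonneg (fun i _ => by positivity)
  refine ⟨C.toNNReal, ?_⟩
  rw [hd]
  refine LipschitzWith.of_dist_le_mul (fun x y => ?_)
  rw [Real.dist_eq, Real.dist_eq]
  have hcoe : (C.toNNReal : ℝ) = C := Real.coe_toNNReal C hC0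
  rw [hcoe]
  have hstep : ∀ i : Fin m, |α i * ν * pfun ((x - ζ i)/ν) - α i * ν * pfun ((y - ζ i)/ν)|
      ≤ |α i| * 544 * |x - y| := by
    intro i
    have hp := pfun_lip ((x - ζ i)/ν) ((y - ζ i)/ν)
    have hdiff : (x - ζ i)/ν - (y - ζ i)/ν = (x - y)/ν := by ring
    rw [hdiff] at hp
    have habs : |(x - y)/ν| = |x - y|/ν := by rw [abs_div, abs_of_pos hν]
    rw [habs] at hp
    have hsplit : |α i * ν * pfun ((x - ζ i)/ν) - α i * ν * pfun ((y - ζ i)/ν)|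
        = |α i| * ν * |pfun ((x - ζ i)/ν) - pfun ((y - ζ i)/ν)| := by
      rw [← mul_sub, abs_mul, abs_mul, abs_of_pos hν]
    rw [hsplit]
    calc |α i| * ν * |pfun ((x - ζ i)/ν) - pfun ((y - ζ i)/ν)|
        ≤ |α i| * ν * (544 * (|x - y|/ν)) :=
          mul_le_mul_of_nonneg_left hp (by positivity)
      _ = |α i| * 544 * |x - y| := by field_simp
  calc |(1 + ∑ i, α i * ν * pfun ((x - ζ i)/ν)) - (1 + ∑ i, α i * ν * pfun ((y - ζ i)/ν))|
      = |∑ i, (α i * ν * pfun ((x - ζ i)/ν) - α i * ν * pfun ((y - ζ i)/ν))| := by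
        congr 1
        rw [Finset.sum_sub_distrib]
        ring
    _ ≤ ∑ i, |α i * ν * pfun ((x - ζ i)/ν) - α i * ν * pfun ((y - ζ i)/ν)| :=
        Finset.abs_sum_le_sum_abs _ _
    _ ≤ ∑ i, |α i| * 544 * |x - y| := Finset.sum_le_sum (fun i _ => hstep i)
    _ = C * |x - y| := by rw [hC, ← Finset.sum_mul]
end
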